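/- Let S be a finite 2-group with a normal subgroup J that is a direct product J = D₁ × D₂ of two nonabelian dihedral 2-groups. Then every element s ∈ S normalizing J permutes the set {[D₁,D₁], [D₂,D₂]} of commutator subgroups; in particular, the product [D₁,D₁]·[D₂,D₂] is normal in S, and if z₁, z₂ are the central involutions of D₁ and D₂ respectively, then conjugation by any s ∈ S either fixes both z₁ and z₂ or swaps them. -/

import Mathlib

section DihedralAux
open DihedralGroup


private lemma zmod_half {m : ℕ} (hm : 2 ≤ m) (i : ZMod (2^m)) (h : i + i = 0) :
    i = 0 ∨ i = ((2^(m-1) : ℕ) : ZMod (2^m)) := by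
  haveI : NeZero (2^m) := ⟨by positivity⟩
  have hi : ((i.val + i.val : ℕ) : ZMod (2^m)) = 0 := by push_cast [ZMod.natCast_val]; simpa
  rw [ZMod.natCast_eq_zero_iff] at hi
  have h2 : 2^m = 2 * 2^(m-1) := by
    conv_lhs => rw [show m = 1 + (m-1) by omega]
    ring
  obtain ⟨c, hc⟩ := hi
  have hX : i.val + i.val = (2^(m-1) * c) * 2 := by rw [hc, h2]; ring
  have hval : i.val = 2^(m-1) * c := by omega
  have hlt : i.val < 2 * 2^(m-1) := h2 ▸ ZMod.val_lt i
  have hpos : 0 < 2^(m-1) := by positivity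
  have hc2 : c = 0 ∨ c = 1 := by
    rcases Nat.lt_or_ge c 2 with h' | h'
    · omega
    · exfalso; nlinarith
  have hrec : ((i.val : ℕ) : ZMod (2^m)) = i := ZMod.natCast_rightInverse i
  rcases hc2 with rfl | rfl
  · left; rw [← hrec, hval]; simp
  · right; rw [← hrec, hval]; norm_num

private lemma two_ne_zmod {m : ℕ} (hm : 2 ≤ m) : ((1 : ZMod (2^m)) + 1) ≠ 0 := by
  haveI : NeZero (2^m) := ⟨by positivity⟩
  have : ((2 : ℕ) : ZMod (2^m)) ≠ 0 := by
    rw [Ne, ZMod.natCast_eq_zero_iff]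
    intro h
    have := Nat.le_of_dvd (by norm_num) h
    have : 4 ≤ 2^m := by calc 4 = 2^2 := by norm_num
                               _ ≤ 2^m := Nat.pow_le_pow_right (by norm_num) hm
    omega
  intro h
  exact this (by push_cast; linear_combination h)

private lemma half_ne_zmod {m : ℕ} (hm : 2 ≤ m) : ((2^(m-1) : ℕ) : ZMod (2^m)) ≠ 0 := by
  haveI : NeZero (2^m) := ⟨by positivity⟩
  rw [Ne, ZMod.natCast_eq_zero_iff]
  intro h
  have h1 := Nat.le_of_dvd (by positivity) h
  have : 2^(m-1) < 2^m := Nat.pow_lt_pow_right (by norm_num) (by omega)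
  omega

private lemma dih_nonabelian {m : ℕ} (hm : 2 ≤ m) :
    ¬ Commute (r (1 : ZMod (2^m))) (sr (0 : ZMod (2^m))) := by
  rw [commute_iff_eq]
  simp only [r_mul_sr, sr_mul_r]
  intro h
  have : (0 : ZMod (2^m)) - 1 = 0 + 1 := by injection h
  apply two_ne_zmod hm
  linear_combination -this

private lemma dih_central_classify {m : ℕ} (hm : 2 ≤ m) (x : DihedralGroup (2^m))
    (hx : ∀ g, Commute x g) : x = 1 ∨ x = r ((2^(m-1) : ℕ) : ZMod (2^m)) := by
  rcases x with i | i
  · have h := (hx (sr 0)).eq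
    simp only [r_mul_sr, sr_mul_r] at h
    have h' : (0 : ZMod (2^m)) - i = 0 + i := by injection h
    have hii : i + i = 0 := by linear_combination -h'
    rcases zmod_half hm i hii with h0 | hh
    · left; rw [h0]; rfl
    · right; rw [hh]
  · exfalso
    have h := (hx (r 1)).eq
    simp only [sr_mul_r, r_mul_sr] at h
    have h' : i + 1 = i - 1 := by injection h
    exact two_ne_zmod hm (by linear_combination h')

private lemma dih_central_sq {m : ℕ} (hm : 2 ≤ m) :
    ∃ t : DihedralGroup (2^m), t * t = r ((2^(m-1) : ℕ) : ZMod (2^m)) := by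
  have key : ((2^(m-2) : ℕ) : ZMod (2^m)) + ((2^(m-2) : ℕ) : ZMod (2^m)) = ((2^(m-1) : ℕ) : ZMod (2^m)) := by
    rw [← Nat.cast_add]
    congr 1
    have h1 : m - 1 = (m - 2) + 1 := by omega
    rw [h1, pow_succ]
    ring
  exact ⟨r ((2^(m-2) : ℕ) : ZMod (2^m)), by rw [r_mul_r, key]⟩

private lemma dih_central_comm {m : ℕ} (hm : 2 ≤ m) :
    ∃ t u : DihedralGroup (2^m), t * u = r ((2^(m-1) : ℕ) : ZMod (2^m)) * (u * t) := by
  have key : ((2^(m-2) : ℕ) : ZMod (2^m)) + ((2^(m-2) : ℕ) : ZMod (2^m)) = ((2^(m-1) : ℕ) : ZMod (2^m)) := by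
    rw [← Nat.cast_add]
    congr 1
    have h1 : m - 1 = (m - 2) + 1 := by omega
    rw [h1, pow_succ]
    ring
  refine ⟨r ((2^(m-2) : ℕ) : ZMod (2^m)), sr 0, ?_⟩
  simp only [r_mul_sr, sr_mul_r]
  congr 1
  linear_combination -key

private lemma dih_cent_abelian {m : ℕ} (hm : 2 ≤ m) (x a b : DihedralGroup (2^m))
    (hx : ¬ ∀ g, Commute x g) (ha : Commute a x) (hb : Commute b x) : Commute a b := by
  rcases x with i | i
  · have hii : ¬ (i + i = 0) := by
      intro h0
      apply hx
      intro g
      rw [commute_iff_eq]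
      rcases g with j | j
      · rw [r_mul_r, r_mul_r, add_comm]
      · rw [r_mul_sr, sr_mul_r]
        congr 1
        linear_combination -h0
    rcases a with c | c
    case sr =>
      exfalso
      have h := ha.eq
      simp only [sr_mul_r, r_mul_sr] at h
      have h' : c + i = c - i := by injection h
      exact hii (by linear_combination h')
    rcases b with d | d
    case sr =>
      exfalso
      have h := hb.eq
      simp only [sr_mul_r, r_mul_sr] at h
      have h' : d + i = d - i := by injection h
      exact hii (by linear_combination h')
    rw [commute_iff_eq, r_mul_r, r_mul_r, add_comm]
  · -- x = sr i
    rcases a with c | c <;> rcases b with d | d <;> rw [commute_iff_eq]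
    · rw [r_mul_r, r_mul_r, add_comm]
    · -- a = r c, b = sr d : need c + c = 0
      have h := ha.eq
      simp only [r_mul_sr, sr_mul_r] at h
      have h' : i - c = i + c := by injection h
      rw [r_mul_sr, sr_mul_r]
      congr 1
      linear_combination h'
    · have h := hb.eq
      simp only [r_mul_sr, sr_mul_r] at h
      have h' : i - d = i + d := by injection h
      rw [r_mul_sr, sr_mul_r]
      congr 1
      linear_combination -h'
    · have h1 := ha.eq
      have h2 := hb.eq
      simp only [sr_mul_sr] at h1 h2
      have h1' : i - c = c - i := by injection h1
      have h2' : i - d = d - i := by injection h2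
      rw [sr_mul_sr, sr_mul_sr]
      congr 1
      linear_combination h1' - h2'

section
variable {S : Type*} [Group S]

private structure DihFacts (D : Subgroup S) (z : S) : Prop where
  mem : z ∈ D
  zne : z ≠ 1
  zz : z * z = 1
  zcent : ∀ d ∈ D, Commute z d
  nonab : ∃ u ∈ D, ∃ v ∈ D, ¬ Commute u v
  zsq : ∃ t ∈ D, t * t = z
  zcomm : ∃ t ∈ D, ∃ u ∈ D, t * u = z * (u * t)
  uniq : ∀ w ∈ D, (∀ d ∈ D, Commute w d) → w ≠ 1 → w = z
  cenab : ∀ x ∈ D, (∃ g ∈ D, ¬ Commute x g) →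
    ∀ a ∈ D, ∀ b ∈ D, Commute a x → Commute b x → Commute a b

private lemma commute_coe_iff {D : Subgroup S} (a b : D) :
    Commute (a : S) (b : S) ↔ Commute a b := by
  rw [commute_iff_eq, commute_iff_eq, ← Subtype.coe_inj]
  push_cast
  rfl

private lemma dihFacts_of_iso {D : Subgroup S} {m : ℕ} (hm : 2 ≤ m)
    (e : D ≃* DihedralGroup (2^m)) {z : S} (hz : z ∈ D) (hzo : orderOf z = 2)
    (hzc : ∀ d ∈ D, Commute z d) : DihFacts D z := by
  have hce : ∀ a b : D, Commute a b ↔ Commute (e a) (e b) := fun a b =>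
    ⟨fun h => h.map e.toMonoidHom, fun h => by
      have := h.map e.symm.toMonoidHom
      simpa using this⟩
  set zc : DihedralGroup (2^m) := r ((2^(m-1) : ℕ) : ZMod (2^m)) with hzcdef
  have zne : z ≠ 1 := by
    intro h
    rw [h, orderOf_one] at hzo
    omega
  set zD : D := ⟨z, hz⟩ with hzD
  -- centrality transfer
  have cent_transfer : ∀ w : D, (∀ d ∈ D, Commute (w : S) d) → ∀ g, Commute (e w) g := by
    intro w hw g
    have : Commute w (e.symm g) := by
      rw [← commute_coe_iff]
      exact hw _ (e.symm g).2
    have := (hce _ _).mp this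
    simpa using this
  have ezc : ∀ g, Commute (e zD) g := cent_transfer zD (fun d hd => hzc d hd)
  have ezne : e zD ≠ 1 := by
    simp only [ne_eq, EmbeddingLike.map_eq_one_iff]
    intro h
    exact zne (congrArg Subtype.val h)
  have hez : e zD = zc := (dih_central_classify hm _ ezc).resolve_left ezne
  refine ⟨hz, zne, ?_, hzc, ?_, ?_, ?_, ?_, ?_⟩
  · have h1 : z ^ 2 = 1 := hzo ▸ pow_orderOf_eq_one z
    rwa [pow_two] at h1
  · -- nonabelian
    refine ⟨e.symm (r 1), (e.symm (r 1)).2, e.symm (sr 0), (e.symm (sr 0)).2, ?_⟩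
    rw [commute_coe_iff, hce]
    simpa using dih_nonabelian hm
  · -- square
    obtain ⟨t, ht⟩ := dih_central_sq hm
    refine ⟨e.symm t, (e.symm t).2, ?_⟩
    have : e.symm t * e.symm t = zD := by
      rw [← map_mul, ht, ← hzcdef, ← hez]
      simp
    calc (e.symm t : S) * e.symm t = ((e.symm t * e.symm t : D) : S) := rfl
      _ = z := by rw [this]
  · -- commutator form
    obtain ⟨t, u, htu⟩ := dih_central_comm hm
    refine ⟨e.symm t, (e.symm t).2, e.symm u, (e.symm u).2, ?_⟩
    have h2 : e.symm (r ((2^(m-1) : ℕ) : ZMod (2^m))) = zD := by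
      exact e.symm_apply_eq.mpr hez.symm
    have : e.symm t * e.symm u = zD * (e.symm u * e.symm t) := by
      have h3 := congrArg e.symm htu
      rw [map_mul, map_mul, map_mul, h2] at h3
      exact h3
    calc (e.symm t : S) * e.symm u = ((e.symm t * e.symm u : D) : S) := rfl
      _ = ((zD * (e.symm u * e.symm t) : D) : S) := by rw [this]
      _ = z * ((e.symm u : S) * e.symm t) := rfl
  · -- uniqueness
    intro w hw hwc hwne
    set wD : D := ⟨w, hw⟩ with hwD
    have ewc : ∀ g, Commute (e wD) g := cent_transfer wD hwc
    have ewne : e wD ≠ 1 := by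
      simp only [ne_eq, EmbeddingLike.map_eq_one_iff]
      intro h
      exact hwne (congrArg Subtype.val h)
    have : e wD = e zD := by rw [hez]; exact (dih_central_classify hm _ ewc).resolve_left ewne
    have := e.injective this
    exact congrArg Subtype.val this
  · -- centralizer abelian
    intro x hx ⟨g, hg, hgnc⟩ a ha b hb hax hbx
    set xD : D := ⟨x, hx⟩
    set aD : D := ⟨a, ha⟩
    set bD : D := ⟨b, hb⟩
    have hxnc : ¬ ∀ g', Commute (e xD) g' := by
      intro hall
      exact hgnc ((commute_coe_iff xD ⟨g, hg⟩).mpr ((hce _ _).mpr (hall _)))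
    have h1 : Commute (e aD) (e xD) := (hce _ _).mp ((commute_coe_iff _ _).mp hax)
    have h2 : Commute (e bD) (e xD) := (hce _ _).mp ((commute_coe_iff _ _).mp hbx)
    have := dih_cent_abelian hm _ _ _ hxnc h1 h2
    exact (commute_coe_iff aD bD).mpr ((hce _ _).mpr this)

end
section
variable {S : Type*} [Group S]

private lemma comm_aux {a b c d : S} (hca : Commute c a) (hcb : Commute c b)
    (hcd : Commute c d) (hda : Commute d a) (hdb : Commute d b) :
    a * c * (b * d) * (a * c)⁻¹ * (b * d)⁻¹ = a * b * a⁻¹ * b⁻¹ := by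
  have h1 : (a * c) * (b * d) = (a * b) * (c * d) := by
    calc (a * c) * (b * d) = a * (c * (b * d)) := by group
      _ = a * ((b * d) * c) := by rw [(hcb.mul_right hcd).eq]
      _ = (a * b) * (d * c) := by group
      _ = (a * b) * (c * d) := by rw [← hcd.eq]
  have h2 : (b * d) * (a * c) = (b * a) * (c * d) := by
    calc (b * d) * (a * c) = b * (d * (a * c)) := by group
      _ = b * ((a * c) * d) := by rw [(hda.mul_right hcd.symm).eq]
      _ = (b * a) * (c * d) := by group
  calc a * c * (b * d) * (a * c)⁻¹ * (b * d)⁻¹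
      = ((a * c) * (b * d)) * ((b * d) * (a * c))⁻¹ := by group
    _ = ((a * b) * (c * d)) * ((b * a) * (c * d))⁻¹ := by rw [h1, h2]
    _ = a * b * a⁻¹ * b⁻¹ := by group

private lemma comm_sub_le_self (T : Subgroup S) : ⁅T, T⁆ ≤ T :=
  Subgroup.commutator_le.mpr fun g hg k hk =>
    mul_mem (mul_mem (mul_mem hg hk) (inv_mem hg)) (inv_mem hk)

private lemma dichotomy {D₁ D₂ T : Subgroup S} {z : S} (F : DihFacts T z)
    (A : D₁ →* T) (B : D₂ →* T)
    (cross : ∀ (x : D₁) (y : D₂), Commute ((A x : S)) ((B y : S)))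
    (gen : ∀ d : T, ∃ (a : D₁) (b : D₂), (d : S) = (A a : S) * (B b : S)) :
    (∀ x : D₁, ∀ d ∈ T, Commute ((A x : S)) d) ∨
    (∀ y : D₂, ∀ d ∈ T, Commute ((B y : S)) d) := by
  by_contra hcon
  push_neg at hcon
  obtain ⟨⟨x₀, d₀, hd₀, hnc₀⟩, ⟨y₀, d₁, hd₁, hnc₁⟩⟩ := hcon
  have hAcomm : ∀ x x' : D₁, Commute ((A x : S)) ((A x' : S)) := fun x x' =>
    F.cenab (B y₀) (B y₀).2 ⟨d₁, hd₁, hnc₁⟩ (A x) (A x).2 (A x') (A x').2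
      (cross x y₀) (cross x' y₀)
  have hBcomm : ∀ y y' : D₂, Commute ((B y : S)) ((B y' : S)) := fun y y' =>
    F.cenab (A x₀) (A x₀).2 ⟨d₀, hd₀, hnc₀⟩ (B y) (B y).2 (B y') (B y').2
      (cross x₀ y).symm (cross x₀ y').symm
  obtain ⟨u, hu, v, hv, huv⟩ := F.nonab
  obtain ⟨a, b, hab⟩ := gen ⟨u, hu⟩
  obtain ⟨a', b', hab'⟩ := gen ⟨v, hv⟩
  apply huv
  rw [show u = ((⟨u, hu⟩ : T) : S) from rfl, show v = ((⟨v, hv⟩ : T) : S) from rfl, hab, hab']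
  exact ((hAcomm a a').mul_right (cross a b')).mul_left
    ((cross a' b).symm.mul_right (hBcomm b b'))

private lemma frattini_surj {D₁ D₂ T : Subgroup S} {z : S} (F : DihFacts T z)
    (A : D₁ →* T) (B : D₂ →* T)
    (gen : ∀ d : T, ∃ (a : D₁) (b : D₂), (d : S) = (A a : S) * (B b : S))
    (Bcent : ∀ y : D₂, ∀ d ∈ T, Commute ((B y : S)) d) :
    ∀ d : T, ∃ a, A a = d := by
  have hBz : ∀ y : D₂, (B y : S) = 1 ∨ (B y : S) = z := fun y => by
    by_cases h : (B y : S) = 1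
    · exact Or.inl h
    · exact Or.inr (F.uniq _ (B y).2 (Bcent y) h)
  have hBsq : ∀ y : D₂, (B y : S) * (B y : S) = 1 := fun y => by
    rcases hBz y with h | h <;> rw [h]
    · rw [one_mul]
    · exact F.zz
  obtain ⟨t, ht, htt⟩ := F.zsq
  obtain ⟨a₁, b₁, h1⟩ := gen ⟨t, ht⟩
  have hz_range : ∃ a : D₁, (A a : S) = z := by
    refine ⟨a₁ * a₁, ?_⟩
    have hcomm1 : Commute ((B b₁ : S)) ((A a₁ : S)) := Bcent b₁ _ (A a₁).2
    have h2 : z = (A a₁ : S) * A a₁ * ((B b₁ : S) * B b₁) := by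
      calc z = t * t := htt.symm
        _ = ((A a₁ : S) * B b₁) * ((A a₁ : S) * B b₁) := by rw [← h1]
        _ = (A a₁ : S) * ((B b₁ : S) * (A a₁ : S)) * (B b₁ : S) := by group
        _ = (A a₁ : S) * ((A a₁ : S) * (B b₁ : S)) * (B b₁ : S) := by rw [hcomm1.eq]
        _ = (A a₁ : S) * A a₁ * ((B b₁ : S) * B b₁) := by group
    rw [hBsq b₁, mul_one] at h2
    rw [map_mul]
    push_cast
    exact h2.symm
  obtain ⟨az, haz⟩ := hz_range
  intro d
  obtain ⟨a, b, hab⟩ := gen d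
  rcases hBz b with h | h
  · exact ⟨a, Subtype.ext (by rw [hab, h, mul_one])⟩
  · refine ⟨a * az, Subtype.ext ?_⟩
    rw [map_mul]
    push_cast
    rw [haz, ← h]
    exact hab.symm

open scoped commutatorElement in
private lemma map_conj_commutator {s : S} {C T O : Subgroup S}
    (A : C →* T) (B : C →* O)
    (h1 : ∀ x : C, s * x * s⁻¹ = (A x : S) * (B x : S))
    (h2 : ∀ x y : C, Commute ((A x : S)) ((B y : S)))
    (h3 : ∀ x y : C, Commute ((B x : S)) ((B y : S)))
    (hsurj : ∀ t : T, ∃ x, A x = t) :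
    Subgroup.map (MulAut.conj s).toMonoidHom ⁅C, C⁆ = ⁅T, T⁆ := by
  apply le_antisymm
  · rw [Subgroup.map_commutator, Subgroup.commutator_le]
    intro g₁ hg₁ g₂ hg₂
    obtain ⟨x, hx, rfl⟩ := hg₁
    obtain ⟨y, hy, rfl⟩ := hg₂
    have e1 : (MulAut.conj s).toMonoidHom x = (A ⟨x, hx⟩ : S) * (B ⟨x, hx⟩ : S) := h1 ⟨x, hx⟩
    have e2 : (MulAut.conj s).toMonoidHom y = (A ⟨y, hy⟩ : S) * (B ⟨y, hy⟩ : S) := h1 ⟨y, hy⟩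
    rw [commutatorElement_def, e1, e2,
      comm_aux (h2 ⟨x, hx⟩ ⟨x, hx⟩).symm (h2 ⟨y, hy⟩ ⟨x, hx⟩).symm (h3 ⟨x, hx⟩ ⟨y, hy⟩)
        (h2 ⟨x, hx⟩ ⟨y, hy⟩).symm (h2 ⟨y, hy⟩ ⟨y, hy⟩).symm]
    exact Subgroup.commutator_mem_commutator (A ⟨x, hx⟩).2 (A ⟨y, hy⟩).2
  · rw [Subgroup.commutator_le]
    intro t₁ ht₁ t₂ ht₂
    obtain ⟨x, hx⟩ := hsurj ⟨t₁, ht₁⟩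
    obtain ⟨y, hy⟩ := hsurj ⟨t₂, ht₂⟩
    refine ⟨⁅(x : S), (y : S)⁆, Subgroup.commutator_mem_commutator x.2 y.2, ?_⟩
    rw [map_commutatorElement]
    have e1 : (MulAut.conj s).toMonoidHom (x : S) = (A x : S) * (B x : S) := h1 x
    have e2 : (MulAut.conj s).toMonoidHom (y : S) = (A y : S) * (B y : S) := h1 y
    rw [commutatorElement_def, commutatorElement_def, e1, e2,
      comm_aux (h2 x x).symm (h2 y x).symm (h3 x y) (h2 x y).symm (h2 y y).symm,
      congrArg Subtype.val hx, congrArg Subtype.val hy]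

private lemma conj_z {s : S} {C T O : Subgroup S} {zC zT : S}
    (FC : DihFacts C zC) (FT : DihFacts T zT)
    (A : C →* T) (B : C →* O)
    (h1 : ∀ x : C, s * x * s⁻¹ = (A x : S) * (B x : S))
    (h2 : ∀ x y : C, Commute ((A x : S)) ((B y : S)))
    (hsurj : ∀ t : T, ∃ x, A x = t)
    (hmem : s * zC * s⁻¹ ∈ T) :
    s * zC * s⁻¹ = zT := by
  apply FT.uniq _ hmem
  · intro d hd
    obtain ⟨y, hy⟩ := hsurj ⟨d, hd⟩
    have hy' : (A y : S) = d := congrArg Subtype.val hy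
    rw [h1 ⟨zC, FC.mem⟩, ← hy']
    apply Commute.mul_left
    · have hc : (⟨zC, FC.mem⟩ : C) * y = y * ⟨zC, FC.mem⟩ :=
        Subtype.ext ((FC.zcent _ y.2).eq)
      have h5 : A ⟨zC, FC.mem⟩ * A y = A y * A ⟨zC, FC.mem⟩ := by
        rw [← map_mul, ← map_mul, hc]
      exact (commute_coe_iff _ _).mpr h5
    · exact (h2 y ⟨zC, FC.mem⟩).symm
  · intro h
    apply FC.zne
    have h6 : zC = s⁻¹ * (s * zC * s⁻¹) * s := by group
    rw [h6, h]
    group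

end
section
variable {S : Type*} [Group S]

private lemma commute_conj_iff (s a b : S) :
    Commute (s * a * s⁻¹) (s * b * s⁻¹) ↔ Commute a b := by
  have k : ∀ x y : S, s * x * s⁻¹ * (s * y * s⁻¹) = s * (x * y) * s⁻¹ := fun x y => by group
  rw [commute_iff_eq, commute_iff_eq, k, k]
  constructor
  · intro h
    have h2 := congrArg (fun w => s⁻¹ * w * s) h
    simpa [mul_assoc] using h2
  · intro h
    rw [h]

private lemma main_dichotomy {J D₁ D₂ : Subgroup S} (hJ : J.Normal)
    (hsup : D₁ ⊔ D₂ = J) (hinf : D₁ ⊓ D₂ = ⊥)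
    (hcomm : ∀ a ∈ D₁, ∀ b ∈ D₂, Commute a b)
    {z₁ z₂ : S} (F₁ : DihFacts D₁ z₁) (F₂ : DihFacts D₂ z₂) (s : S) :
    (Subgroup.map (MulAut.conj s).toMonoidHom ⁅D₁, D₁⁆ = ⁅D₁, D₁⁆ ∧
      Subgroup.map (MulAut.conj s).toMonoidHom ⁅D₂, D₂⁆ = ⁅D₂, D₂⁆ ∧
      s * z₁ * s⁻¹ = z₁ ∧ s * z₂ * s⁻¹ = z₂) ∨
    (Subgroup.map (MulAut.conj s).toMonoidHom ⁅D₁, D₁⁆ = ⁅D₂, D₂⁆ ∧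
      Subgroup.map (MulAut.conj s).toMonoidHom ⁅D₂, D₂⁆ = ⁅D₁, D₁⁆ ∧
      s * z₁ * s⁻¹ = z₂ ∧ s * z₂ * s⁻¹ = z₁) := by
  have hD1J : D₁ ≤ J := hsup ▸ le_sup_left
  have hD2J : D₂ ≤ J := hsup ▸ le_sup_right
  have hc12 : ∀ (a : D₁) (b : D₂), Commute (a : S) (b : S) := fun a b => hcomm _ a.2 _ b.2
  -- uniqueness of decompositions
  have huniq : ∀ a ∈ D₁, ∀ a' ∈ D₁, ∀ b ∈ D₂, ∀ b' ∈ D₂,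
      a * b = a' * b' → a = a' ∧ b = b' := by
    intro a ha a' ha' b hb b' hb' h
    have h1 : a'⁻¹ * a = b' * b⁻¹ := by
      calc a'⁻¹ * a = a'⁻¹ * (a * b) * b⁻¹ := by group
        _ = a'⁻¹ * (a' * b') * b⁻¹ := by rw [h]
        _ = b' * b⁻¹ := by group
    have hma : a'⁻¹ * a ∈ D₁ := mul_mem (D₁.inv_mem ha') ha
    have hmb : a'⁻¹ * a ∈ D₂ := h1 ▸ mul_mem hb' (D₂.inv_mem hb)
    have hm : a'⁻¹ * a ∈ D₁ ⊓ D₂ := Subgroup.mem_inf.mpr ⟨hma, hmb⟩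
    rw [hinf, Subgroup.mem_bot] at hm
    have e1 : a = a' := (inv_mul_eq_one.mp hm).symm
    refine ⟨e1, ?_⟩
    rw [e1] at h
    exact mul_left_cancel h
  -- the internal direct product equivalence
  have hcomm' : ∀ (m : D₁) (n : D₂), Commute (D₁.subtype m) (D₂.subtype n) := fun m n =>
    hc12 m n
  set f : D₁ × D₂ →* S := (D₁.subtype).noncommCoprod D₂.subtype hcomm' with hf
  have f_apply : ∀ p : D₁ × D₂, f p = (p.1 : S) * (p.2 : S) := fun p => rfl
  have hf_mem : ∀ p, f p ∈ J := fun p => by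
    rw [f_apply]; exact mul_mem (hD1J p.1.2) (hD2J p.2.2)
  have hf_inj : Function.Injective f := by
    intro p q h
    rw [f_apply, f_apply] at h
    obtain ⟨e1, e2⟩ := huniq _ p.1.2 _ q.1.2 _ p.2.2 _ q.2.2 h
    exact Prod.ext (Subtype.ext e1) (Subtype.ext e2)
  have hJ_le_range : J ≤ f.range := by
    rw [← hsup]
    apply sup_le
    · intro x hx
      exact ⟨(⟨x, hx⟩, 1), by rw [f_apply]; simp⟩
    · intro x hx
      exact ⟨(1, ⟨x, hx⟩), by rw [f_apply]; simp⟩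
  set f' : D₁ × D₂ →* J := f.codRestrict J hf_mem with hf'
  have hf'_bij : Function.Bijective f' := by
    constructor
    · intro p q h
      exact hf_inj (congrArg Subtype.val h)
    · intro x
      obtain ⟨p, hp⟩ := hJ_le_range x.2
      exact ⟨p, Subtype.ext hp⟩
  set E := MulEquiv.ofBijective f' hf'_bij with hE
  set π₁ : J →* D₁ := (MonoidHom.fst _ _).comp E.symm.toMonoidHom with hπ₁
  set π₂ : J →* D₂ := (MonoidHom.snd _ _).comp E.symm.toMonoidHom with hπ₂
  have key : ∀ x : J, ((π₁ x : S)) * (π₂ x) = x := by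
    intro x
    have h0 : E (E.symm x) = x := E.apply_symm_apply x
    calc (π₁ x : S) * (π₂ x : S) = (f' (E.symm x) : S) := rfl
      _ = ((E (E.symm x) : J) : S) := rfl
      _ = x := by rw [h0]
  set φ : J →* J :=
    { toFun := fun x => ⟨s * x * s⁻¹, hJ.conj_mem x x.2 s⟩,
      map_one' := by ext; simp,
      map_mul' := fun x y => by ext; push_cast; group } with hφ
  set ι₁ : D₁ →* J := Subgroup.inclusion hD1J with hι₁
  set ι₂ : D₂ →* J := Subgroup.inclusion hD2J with hι₂
  set α : D₁ →* D₁ := π₁.comp (φ.comp ι₁) with hα'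
  set β : D₁ →* D₂ := π₂.comp (φ.comp ι₁) with hβ'
  set γ : D₂ →* D₁ := π₁.comp (φ.comp ι₂) with hγ'
  set δ : D₂ →* D₂ := π₂.comp (φ.comp ι₂) with hδ'
  have dec₁ : ∀ x : D₁, s * x * s⁻¹ = (α x : S) * β x := fun x => (key (φ (ι₁ x))).symm
  have dec₂ : ∀ y : D₂, s * y * s⁻¹ = (γ y : S) * δ y := fun y => (key (φ (ι₂ y))).symm
  -- cross-component commutation
  have crossAG : ∀ (x : D₁) (y : D₂),
      Commute ((α x : S)) ((γ y : S)) ∧ Commute ((β x : S)) ((δ y : S)) := by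
    intro x y
    have hc : Commute (s * x * s⁻¹) (s * y * s⁻¹) := (commute_conj_iff s _ _).mpr (hc12 x y)
    rw [dec₁ x, dec₂ y] at hc
    have e1 : ((α x : S) * β x) * ((γ y : S) * δ y) = ((α x : S) * γ y) * ((β x : S) * δ y) := by
      calc ((α x : S) * β x) * ((γ y : S) * δ y)
          = (α x : S) * ((β x : S) * (γ y : S)) * δ y := by group
        _ = (α x : S) * ((γ y : S) * (β x : S)) * δ y := by rw [(hc12 (γ y) (β x)).symm.eq]
        _ = ((α x : S) * γ y) * ((β x : S) * δ y) := by group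
    have e2 : ((γ y : S) * δ y) * ((α x : S) * β x) = ((γ y : S) * α x) * ((δ y : S) * β x) := by
      calc ((γ y : S) * δ y) * ((α x : S) * β x)
          = (γ y : S) * ((δ y : S) * (α x : S)) * β x := by group
        _ = (γ y : S) * ((α x : S) * (δ y : S)) * β x := by rw [(hc12 (α x) (δ y)).symm.eq]
        _ = ((γ y : S) * α x) * ((δ y : S) * β x) := by group
    have e3 := hc.eq
    rw [e1, e2] at e3
    obtain ⟨c1, c2⟩ := huniq _ (mul_mem (α x).2 (γ y).2) _ (mul_mem (γ y).2 (α x).2)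
      _ (mul_mem (β x).2 (δ y).2) _ (mul_mem (δ y).2 (β x).2) e3
    exact ⟨c1, c2⟩
  -- generation
  have gen_core : ∀ w : J, ∃ (a : D₁) (b : D₂),
      s * w * s⁻¹ = ((α a : S) * γ b) * ((β a : S) * δ b) := by
    intro w
    refine ⟨π₁ w, π₂ w, ?_⟩
    set a := π₁ w
    set b := π₂ w
    have hw : (w : S) = (a : S) * b := (key w).symm
    calc s * w * s⁻¹ = (s * a * s⁻¹) * (s * b * s⁻¹) := by rw [hw]; group
      _ = ((α a : S) * β a) * ((γ b : S) * δ b) := by rw [dec₁ a, dec₂ b]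
      _ = (α a : S) * ((β a : S) * (γ b : S)) * δ b := by group
      _ = (α a : S) * ((γ b : S) * (β a : S)) * δ b := by rw [(hc12 (γ b) (β a)).symm.eq]
      _ = ((α a : S) * γ b) * ((β a : S) * δ b) := by group
  have gen₁ : ∀ d : D₁, ∃ (a : D₁) (b : D₂), (d : S) = (α a : S) * γ b := by
    intro d
    set w : J := ⟨s⁻¹ * d * s, by
      have := hJ.conj_mem _ (hD1J d.2) s⁻¹
      simpa using this⟩ with hw
    obtain ⟨a, b, hab⟩ := gen_core w
    have hsw : s * (w : S) * s⁻¹ = (d : S) := by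
      show s * (s⁻¹ * (d : S) * s) * s⁻¹ = (d : S)
      group
    rw [hsw] at hab
    have h4 : (d : S) * 1 = ((α a : S) * γ b) * ((β a : S) * δ b) := by rw [mul_one]; exact hab
    obtain ⟨c1, _⟩ := huniq _ d.2 _ (mul_mem (α a).2 (γ b).2) _ (one_mem _)
      _ (mul_mem (β a).2 (δ b).2) h4
    exact ⟨a, b, c1⟩
  have gen₂ : ∀ d : D₂, ∃ (a : D₁) (b : D₂), (d : S) = (β a : S) * δ b := by
    intro d
    set w : J := ⟨s⁻¹ * d * s, by
      have := hJ.conj_mem _ (hD2J d.2) s⁻¹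
      simpa using this⟩ with hw
    obtain ⟨a, b, hab⟩ := gen_core w
    have hsw : s * (w : S) * s⁻¹ = (d : S) := by
      show s * (s⁻¹ * (d : S) * s) * s⁻¹ = (d : S)
      group
    rw [hsw] at hab
    have h4 : 1 * (d : S) = ((α a : S) * γ b) * ((β a : S) * δ b) := by rw [one_mul]; exact hab
    obtain ⟨_, c2⟩ := huniq _ (one_mem _) _ (mul_mem (α a).2 (γ b).2) _ d.2
      _ (mul_mem (β a).2 (δ b).2) h4
    exact ⟨a, b, c2⟩
  -- the two dichotomies
  have dich₁ := dichotomy F₁ α γ (fun x y => (crossAG x y).1) gen₁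
  have dich₂ := dichotomy F₂ β δ (fun x y => (crossAG x y).2) gen₂
  have hz1mem : z₁ ∈ ⁅D₁, D₁⁆ := by
    obtain ⟨t, ht, u, hu, htu⟩ := F₁.zcomm
    have h7 : z₁ = t * u * t⁻¹ * u⁻¹ := by
      calc z₁ = z₁ * (u * t) * (u * t)⁻¹ := by group
        _ = (t * u) * (u * t)⁻¹ := by rw [← htu]
        _ = t * u * t⁻¹ * u⁻¹ := by group
    rw [h7]
    exact Subgroup.commutator_mem_commutator ht hu
  have hz2mem : z₂ ∈ ⁅D₂, D₂⁆ := by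
    obtain ⟨t, ht, u, hu, htu⟩ := F₂.zcomm
    have h7 : z₂ = t * u * t⁻¹ * u⁻¹ := by
      calc z₂ = z₂ * (u * t) * (u * t)⁻¹ := by group
        _ = (t * u) * (u * t)⁻¹ := by rw [← htu]
        _ = t * u * t⁻¹ * u⁻¹ := by group
    rw [h7]
    exact Subgroup.commutator_mem_commutator ht hu
  have memmap : ∀ (z : S) (K : Subgroup S), z ∈ K →
      s * z * s⁻¹ ∈ Subgroup.map (MulAut.conj s).toMonoidHom K := fun z K hzK =>
    ⟨z, hzK, by simp [MulAut.conj_apply]⟩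
  rcases dich₁ with hA | hG <;> rcases dich₂ with hB | hD
  · -- α central and β central : contradiction (φ(D₁) would be central)
    exfalso
    obtain ⟨u, hu, v, hv, huv⟩ := F₁.nonab
    apply huv
    rw [← commute_conj_iff s u v, dec₁ ⟨u, hu⟩, dec₁ ⟨v, hv⟩]
    exact ((hA ⟨u, hu⟩ _ (α ⟨v, hv⟩).2).mul_right (hc12 _ _)).mul_left
      ((hc12 (α ⟨v, hv⟩) (β ⟨u, hu⟩)).symm.mul_right (hB ⟨u, hu⟩ _ (β ⟨v, hv⟩).2))
  · -- α central and δ central : the swap case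
    have γsurj : ∀ d : D₁, ∃ b, γ b = d := by
      refine frattini_surj F₁ γ α ?_ hA
      intro d
      obtain ⟨a, b, hab⟩ := gen₁ d
      exact ⟨b, a, by rw [hab, (hA a _ (γ b).2).eq]⟩
    have βsurj : ∀ d : D₂, ∃ a, β a = d := frattini_surj F₂ β δ gen₂ hD
    have dec₁' : ∀ x : D₁, s * x * s⁻¹ = (β x : S) * α x := fun x => by
      rw [dec₁ x]; exact (hc12 (α x) (β x)).eq
    have map₁ : Subgroup.map (MulAut.conj s).toMonoidHom ⁅D₁, D₁⁆ = ⁅D₂, D₂⁆ :=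
      map_conj_commutator β α dec₁' (fun x y => (hc12 (α y) (β x)).symm)
        (fun x y => hA x _ (α y).2) βsurj
    have map₂ : Subgroup.map (MulAut.conj s).toMonoidHom ⁅D₂, D₂⁆ = ⁅D₁, D₁⁆ :=
      map_conj_commutator γ δ dec₂ (fun x y => hc12 (γ x) (δ y))
        (fun x y => hD x _ (δ y).2) γsurj
    have hm1 : s * z₁ * s⁻¹ ∈ D₂ := by
      have h8 := memmap z₁ _ hz1mem
      rw [map₁] at h8
      exact comm_sub_le_self D₂ h8
    have hm2 : s * z₂ * s⁻¹ ∈ D₁ := by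
      have h8 := memmap z₂ _ hz2mem
      rw [map₂] at h8
      exact comm_sub_le_self D₁ h8
    exact Or.inr ⟨map₁, map₂,
      conj_z F₁ F₂ β α dec₁' (fun x y => (hc12 (α y) (β x)).symm) βsurj hm1,
      conj_z F₂ F₁ γ δ dec₂ (fun x y => hc12 (γ x) (δ y)) γsurj hm2⟩
  · -- γ central and β central : the fixing case
    have αsurj : ∀ d : D₁, ∃ a, α a = d := frattini_surj F₁ α γ gen₁ hG
    have δsurj : ∀ d : D₂, ∃ b, δ b = d := by
      refine frattini_surj F₂ δ β ?_ hB
      intro d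
      obtain ⟨a, b, hab⟩ := gen₂ d
      exact ⟨b, a, by rw [hab, (hB a _ (δ b).2).eq]⟩
    have dec₂' : ∀ y : D₂, s * y * s⁻¹ = (δ y : S) * γ y := fun y => by
      rw [dec₂ y]; exact (hc12 (γ y) (δ y)).eq
    have map₁ : Subgroup.map (MulAut.conj s).toMonoidHom ⁅D₁, D₁⁆ = ⁅D₁, D₁⁆ :=
      map_conj_commutator α β dec₁ (fun x y => hc12 (α x) (β y))
        (fun x y => hB x _ (β y).2) αsurj
    have map₂ : Subgroup.map (MulAut.conj s).toMonoidHom ⁅D₂, D₂⁆ = ⁅D₂, D₂⁆ :=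
      map_conj_commutator δ γ dec₂' (fun x y => (hc12 (γ y) (δ x)).symm)
        (fun x y => hG x _ (γ y).2) δsurj
    have hm1 : s * z₁ * s⁻¹ ∈ D₁ := by
      have h8 := memmap z₁ _ hz1mem
      rw [map₁] at h8
      exact comm_sub_le_self D₁ h8
    have hm2 : s * z₂ * s⁻¹ ∈ D₂ := by
      have h8 := memmap z₂ _ hz2mem
      rw [map₂] at h8
      exact comm_sub_le_self D₂ h8
    exact Or.inl ⟨map₁, map₂,
      conj_z F₁ F₁ α β dec₁ (fun x y => hc12 (α x) (β y)) αsurj hm1,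
      conj_z F₂ F₂ δ γ dec₂' (fun x y => (hc12 (γ y) (δ x)).symm) δsurj hm2⟩
  · -- γ central and δ central : contradiction (φ(D₂) would be central)
    exfalso
    obtain ⟨u, hu, v, hv, huv⟩ := F₂.nonab
    apply huv
    rw [← commute_conj_iff s u v, dec₂ ⟨u, hu⟩, dec₂ ⟨v, hv⟩]
    exact ((hG ⟨u, hu⟩ _ (γ ⟨v, hv⟩).2).mul_right (hc12 (γ ⟨u, hu⟩) (δ ⟨v, hv⟩))).mul_left
      ((hc12 (γ ⟨v, hv⟩) (δ ⟨u, hu⟩)).symm.mul_right (hD ⟨u, hu⟩ _ (δ ⟨v, hv⟩).2))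

end
end DihedralAux

/-- Let `S` be a finite `2`-group with a normal subgroup `J` which is the internal
direct product of two nonabelian dihedral `2`-subgroups `D₁`, `D₂`.  Then every
element of `S` permutes the pair of commutator subgroups `{[D₁,D₁],[D₂,D₂]}`; in
particular `[D₁,D₁]·[D₂,D₂]` is normal in `S`, and conjugation by any `s ∈ S`
either fixes both central involutions `z₁, z₂` or swaps them. -/
theorem stmt_8 (S : Type*) [Group S] [Finite S] (hS : IsPGroup 2 S)
    (J D₁ D₂ : Subgroup S) (hJ : J.Normal)
    (k₁ k₂ : ℕ) (hk₁ : 3 ≤ k₁) (hk₂ : 3 ≤ k₂)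
    (hD₁ : Nonempty (D₁ ≃* DihedralGroup (2 ^ (k₁ - 1))))
    (hD₂ : Nonempty (D₂ ≃* DihedralGroup (2 ^ (k₂ - 1))))
    (hsup : D₁ ⊔ D₂ = J) (hinf : D₁ ⊓ D₂ = ⊥)
    (hcomm : ∀ a ∈ D₁, ∀ b ∈ D₂, Commute a b)
    (z₁ z₂ : S) (hz₁ : z₁ ∈ D₁) (hz₂ : z₂ ∈ D₂)
    (hz₁o : orderOf z₁ = 2) (hz₂o : orderOf z₂ = 2)
    (hz₁c : ∀ d ∈ D₁, Commute z₁ d) (hz₂c : ∀ d ∈ D₂, Commute z₂ d) :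
    (∀ s : S,
      (Subgroup.map (MulAut.conj s).toMonoidHom ⁅D₁, D₁⁆ = ⁅D₁, D₁⁆ ∧
        Subgroup.map (MulAut.conj s).toMonoidHom ⁅D₂, D₂⁆ = ⁅D₂, D₂⁆) ∨
      (Subgroup.map (MulAut.conj s).toMonoidHom ⁅D₁, D₁⁆ = ⁅D₂, D₂⁆ ∧
        Subgroup.map (MulAut.conj s).toMonoidHom ⁅D₂, D₂⁆ = ⁅D₁, D₁⁆)) ∧
    (⁅D₁, D₁⁆ ⊔ ⁅D₂, D₂⁆ : Subgroup S).Normal ∧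
    (∀ s : S,
      (s * z₁ * s⁻¹ = z₁ ∧ s * z₂ * s⁻¹ = z₂) ∨
      (s * z₁ * s⁻¹ = z₂ ∧ s * z₂ * s⁻¹ = z₁)) := by
  obtain ⟨e₁⟩ := hD₁
  obtain ⟨e₂⟩ := hD₂
  have hm₁ : 2 ≤ k₁ - 1 := by omega
  have hm₂ : 2 ≤ k₂ - 1 := by omega
  have F₁ := dihFacts_of_iso hm₁ e₁ hz₁ hz₁o hz₁c
  have F₂ := dihFacts_of_iso hm₂ e₂ hz₂ hz₂o hz₂c
  have main := main_dichotomy hJ hsup hinf hcomm F₁ F₂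
  refine ⟨fun s => (main s).imp (fun h => ⟨h.1, h.2.1⟩) (fun h => ⟨h.1, h.2.1⟩), ?_,
    fun s => (main s).imp (fun h => h.2.2) (fun h => h.2.2)⟩
  constructor
  intro n hn g
  have h9 : Subgroup.map (MulAut.conj g).toMonoidHom (⁅D₁, D₁⁆ ⊔ ⁅D₂, D₂⁆) =
      ⁅D₁, D₁⁆ ⊔ ⁅D₂, D₂⁆ := by
    rw [Subgroup.map_sup]
    rcases main g with ⟨h1, h2, _⟩ | ⟨h1, h2, _⟩
    · rw [h1, h2]
    · rw [h1, h2, sup_comm]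
  rw [← h9]
  exact ⟨n, hn, by simp [MulAut.conj_apply]⟩
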